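/- If G is a group with trivial center such that the centralizer C_G(g) is abelian for every g ∈ G \ {1}, then nil_G(a) = C_G(a) for every nontrivial a ∈ G; in particular nil_G(a) is a subgroup of G for all a ∈ G. -/

import Mathlib

lemma center_ne_bot_of_nilpotent (H : Type*) [Group H] [Group.IsNilpotent H]
    [Nontrivial H] : Subgroup.center H ≠ ⊥ := by
  intro hbot
  have hall : ∀ n, Subgroup.upperCentralSeries H n = ⊥ := by
    intro n
    induction n with
    | zero => simp
    | succ n ih =>
      ext x
      rw [Subgroup.mem_upperCentralSeries_succ_iff]
      simp only [ih, Subgroup.mem_bot]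
      constructor
      · intro h
        have hc : x ∈ Subgroup.center H := by
          rw [Subgroup.mem_center_iff]
          intro y
          have h1 : x * y * x⁻¹ = y := mul_inv_eq_one.mp (h y)
          have h2 : x * y = y * x := by
            have := congrArg (· * x) h1
            simpa [mul_assoc] using this
          exact h2.symm
        rw [hbot, Subgroup.mem_bot] at hc
        exact hc
      · rintro rfl y; simp
  obtain ⟨n, hn⟩ := Group.IsNilpotent.nilpotent (G := H)
  rw [hall n] at hn
  obtain ⟨x, y, hxy⟩ := exists_pair_ne H
  have hx : x = 1 := by
    have : x ∈ (⊥ : Subgroup H) := hn ▸ Subgroup.mem_top x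
    simpa using this
  have hy : y = 1 := by
    have : y ∈ (⊥ : Subgroup H) := hn ▸ Subgroup.mem_top y
    simpa using this
  exact hxy (hx.trans hy.symm)

lemma nilpotent_of_comm {G : Type*} [Group G] (H : Subgroup G)
    (h : ∀ x ∈ H, ∀ y ∈ H, x * y = y * x) : Group.IsNilpotent H := by
  letI : CommGroup H :=
    { (inferInstance : Group H) with
      mul_comm := fun x y => Subtype.ext (h x.1 x.2 y.1 y.2) }
  infer_instance

def nilizer {G : Type*} [Group G] (x : G) : Set G :=
  {g | Group.IsNilpotent (Subgroup.closure ({x, g} : Set G))}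

def nilSet (G : Type*) [Group G] : Set G :=
  {x | ∀ y : G, Group.IsNilpotent (Subgroup.closure ({x, y} : Set G))}


theorem stmt7 {G : Type*} [Group G] (hz : Subgroup.center G = ⊥)
    (hac : ∀ g : G, g ≠ 1 → ∀ a b : G,
      a ∈ Subgroup.centralizer {g} → b ∈ Subgroup.centralizer {g} → a * b = b * a) :
    (∀ a : G, a ≠ 1 → nilizer a = (Subgroup.centralizer {a} : Set G)) ∧
      ∀ a : G, ∃ H : Subgroup G, (H : Set G) = nilizer a := by
  have main : ∀ a : G, a ≠ 1 → nilizer a = (Subgroup.centralizer {a} : Set G) := by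
    intro a ha
    ext g
    constructor
    · intro hg
      -- hg : closure {a, g} is nilpotent
      haveI : Group.IsNilpotent (Subgroup.closure ({a, g} : Set G)) := hg
      set H := Subgroup.closure ({a, g} : Set G) with hH
      have haH : a ∈ H := Subgroup.subset_closure (by simp)
      have hgH : g ∈ H := Subgroup.subset_closure (by simp)
      haveI : Nontrivial H := by
        refine ⟨⟨a, haH⟩, 1, ?_⟩
        simp [Subtype.ext_iff, ha]
      have hcen := center_ne_bot_of_nilpotent H
      obtain ⟨z, hzc, hz1⟩ : ∃ z : H, z ∈ Subgroup.center H ∧ z ≠ 1 := by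
        by_contra hcon
        push_neg at hcon
        exact hcen (Subgroup.eq_bot_iff_forall _ |>.mpr fun z hzc => hcon z hzc)
      have hz1' : (z : G) ≠ 1 := by
        intro h; exact hz1 (Subtype.ext h)
      have hcomm : ∀ x ∈ H, x * (z : G) = (z : G) * x := by
        intro x hx
        have := (Subgroup.mem_center_iff.mp hzc) ⟨x, hx⟩
        exact congrArg Subtype.val this
      have hamem : a ∈ Subgroup.centralizer {(z : G)} := by
        rw [Subgroup.mem_centralizer_singleton_iff]
        exact hcomm a haH
      have hgmem : g ∈ Subgroup.centralizer {(z : G)} := by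
        rw [Subgroup.mem_centralizer_singleton_iff]
        exact hcomm g hgH
      have := hac (z : G) hz1' a g hamem hgmem
      rw [SetLike.mem_coe, Subgroup.mem_centralizer_singleton_iff]
      exact this.symm
    · intro hg
      rw [SetLike.mem_coe] at hg
      have hsub : Subgroup.closure ({a, g} : Set G) ≤ Subgroup.centralizer {a} := by
        rw [Subgroup.closure_le]
        intro x hx
        rcases hx with rfl | hx
        · exact Subgroup.mem_centralizer_singleton_iff.mpr rfl
        · rw [Set.mem_singleton_iff] at hx; subst hx; exact hg
      exact nilpotent_of_comm _ fun x hx y hy =>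
        hac a ha x y (hsub hx) (hsub hy)
  refine ⟨main, fun a => ?_⟩
  by_cases ha : a = 1
  · subst ha
    refine ⟨⊤, ?_⟩
    ext g
    simp only [Subgroup.coe_top, Set.mem_univ, true_iff]
    show Group.IsNilpotent (Subgroup.closure ({1, g} : Set G))
    have hsub : Subgroup.closure ({1, g} : Set G) ≤ Subgroup.zpowers g := by
      rw [Subgroup.closure_le]
      intro x hx
      simp only [Set.mem_insert_iff, Set.mem_singleton_iff] at hx
      rcases hx with rfl | rfl
      · exact Subgroup.one_mem _
      · exact Subgroup.mem_zpowers x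
    refine nilpotent_of_comm _ fun x hx y hy => ?_
    obtain ⟨m, rfl⟩ := Subgroup.mem_zpowers_iff.mp (hsub hx)
    obtain ⟨n, rfl⟩ := Subgroup.mem_zpowers_iff.mp (hsub hy)
    rw [← zpow_add, ← zpow_add, add_comm]
  · exact ⟨Subgroup.centralizer {a}, (main a ha).symm⟩
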